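/- Let q > 1, set E_q = (q-1)^{q-1}/q^q, and let m ≥ 0 be an integer. Suppose x_0, x_1, ..., x_m are real numbers with x_0 > 0 such that x_{k-1} = x_k (1 - x_k)^{q-1} for every 1 ≤ k ≤ m, and 0 < x_k ≤ min{1/2, E_q} for every 1 ≤ k ≤ m. Then 1/x_0 ≤ 1/x_m + 10(q-1)m. -/

import Mathlib

private lemma stmt16_key (q : ℝ) (hq : 1 < q) :
    (q - 1) * ((q - 1) ^ (q - 1) / q ^ q) ≤ 3 / 8 := by
  have hp : (0:ℝ) < q - 1 := by linarith
  have hq0 : (0:ℝ) < q := by linarith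
  have h1 : (q - 1) * ((q - 1) ^ (q - 1) / q ^ q) = ((q - 1) / q) ^ q := by
    rw [Real.div_rpow hp.le hq0.le]
    rw [mul_div_assoc']
    congr 1
    rw [mul_comm, ← Real.rpow_add_one hp.ne']
    ring_nf
  rw [h1]
  have hr : (0:ℝ) < (q - 1) / q := div_pos hp hq0
  have hr1 : (q - 1) / q < 1 := by
    rw [div_lt_one hq0]; linarith
  have hlog : Real.log ((q - 1) / q) ≤ (q - 1) / q - 1 :=
    Real.log_le_sub_one_of_pos hr
  have h2 : ((q - 1) / q) ^ q = Real.exp (q * Real.log ((q - 1) / q)) := by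
    rw [Real.rpow_def_of_pos hr, mul_comm]
  rw [h2]
  have h3 : q * Real.log ((q - 1) / q) ≤ -1 := by
    have : q * Real.log ((q - 1) / q) ≤ q * ((q - 1) / q - 1) :=
      mul_le_mul_of_nonneg_left hlog hq0.le
    have h4 : q * ((q - 1) / q - 1) = -1 := by field_simp; ring
    linarith
  have h5 : Real.exp (q * Real.log ((q - 1) / q)) ≤ Real.exp (-1) :=
    Real.exp_le_exp.mpr h3
  have h6 : Real.exp (-1) ≤ 3 / 8 := by
    rw [Real.exp_neg]
    rw [inv_le_comm₀ (Real.exp_pos 1) (by norm_num)]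
    have := Real.exp_one_gt_d9
    linarith
  linarith

private lemma stmt16_step (q y : ℝ) (hq : 1 < q) (hy : 0 < y) (hy2 : y ≤ 1 / 2)
    (hpy : (q - 1) * y ≤ 3 / 8) :
    1 / (y * (1 - y) ^ (q - 1)) ≤ 1 / y + 10 * (q - 1) := by
  have hp : (0:ℝ) < q - 1 := by linarith
  have h1y : (0:ℝ) < 1 - y := by linarith
  have hA : (0:ℝ) < (1 - y) ^ (q - 1) := Real.rpow_pos_of_pos h1y _
  -- -log(1-y) ≤ 2y
  have hlog : -Real.log (1 - y) ≤ 2 * y := by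
    have h := Real.log_le_sub_one_of_pos (inv_pos.mpr h1y)
    rw [Real.log_inv] at h
    have : (1 - y)⁻¹ - 1 ≤ 2 * y := by
      rw [inv_eq_one_div, div_sub' h1y.ne']
      rw [div_le_iff₀ h1y]
      nlinarith
    linarith
  set t : ℝ := 2 * ((q - 1) * y) with ht
  have ht0 : 0 ≤ t := by positivity
  have ht34 : t ≤ 3 / 4 := by rw [ht]; linarith
  -- (1-y)^(-(q-1)) ≤ 1 + 10 (q-1) y
  have hkey : ((1 - y) ^ (q - 1))⁻¹ ≤ 1 + 10 * ((q - 1) * y) := by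
    rw [← Real.rpow_neg h1y.le, Real.rpow_def_of_pos h1y, mul_comm]
    have he : -(q - 1) * Real.log (1 - y) ≤ t := by
      have : -(q - 1) * Real.log (1 - y) = (q - 1) * (-Real.log (1 - y)) := by ring
      rw [this, ht]
      nlinarith
    have h2 : Real.exp (-(q - 1) * Real.log (1 - y)) ≤ Real.exp t :=
      Real.exp_le_exp.mpr he
    have h3 : Real.exp t ≤ (1 - t)⁻¹ := by
      have h4 : 1 - t ≤ Real.exp (-t) := by
        have := Real.add_one_le_exp (-t); linarith
      have h5 : (0:ℝ) < 1 - t := by linarith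
      rw [Real.exp_neg] at h4
      rwa [le_inv_comm₀ h5 (Real.exp_pos t)] at h4
    have h6 : (1 - t)⁻¹ ≤ 1 + 4 * t := by
      rw [inv_le_iff_one_le_mul₀ (by linarith)]
      nlinarith
    have h7 : 1 + 4 * t ≤ 1 + 10 * ((q - 1) * y) := by
      rw [ht]; nlinarith
    linarith
  calc 1 / (y * (1 - y) ^ (q - 1)) = (1 / y) * ((1 - y) ^ (q - 1))⁻¹ := by
        rw [one_div, mul_inv, one_div]
    _ ≤ (1 / y) * (1 + 10 * ((q - 1) * y)) := by
        apply mul_le_mul_of_nonneg_left hkey (by positivity)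
    _ = 1 / y + 10 * (q - 1) := by field_simp

/-- For `q > 1`, `E_q = (q-1)^(q-1)/q^q` and an integer `m ≥ 0`: if `x 0 > 0`,
`x (k-1) = x k * (1 - x k)^(q-1)` for `1 ≤ k ≤ m`, and `0 < x k ≤ min{1/2, E_q}` for
`1 ≤ k ≤ m`, then `1/x 0 ≤ 1/x m + 10(q-1)m`. -/
theorem stmt_16 (q : ℝ) (hq : 1 < q) (m : ℕ) (x : ℕ → ℝ) (hx0 : 0 < x 0)
    (hrec : ∀ k : ℕ, 1 ≤ k → k ≤ m → x (k - 1) = x k * (1 - x k) ^ (q - 1))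
    (hbnd : ∀ k : ℕ, 1 ≤ k → k ≤ m →
      0 < x k ∧ x k ≤ min (1 / 2) ((q - 1) ^ (q - 1) / q ^ q)) :
    1 / x 0 ≤ 1 / x m + 10 * (q - 1) * m := by
  induction m with
  | zero => simp
  | succ n ih =>
    have hih : 1 / x 0 ≤ 1 / x n + 10 * (q - 1) * n :=
      ih (fun k hk hkn => hrec k hk (hkn.trans (Nat.le_succ n)))
        (fun k hk hkn => hbnd k hk (hkn.trans (Nat.le_succ n)))
    obtain ⟨hy, hybnd⟩ := hbnd (n + 1) (Nat.le_add_left 1 n) le_rfl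
    have hy2 : x (n + 1) ≤ 1 / 2 := hybnd.trans (min_le_left _ _)
    have hyE : x (n + 1) ≤ (q - 1) ^ (q - 1) / q ^ q := hybnd.trans (min_le_right _ _)
    have hpy : (q - 1) * x (n + 1) ≤ 3 / 8 := by
      have h1 : (q - 1) * x (n + 1) ≤ (q - 1) * ((q - 1) ^ (q - 1) / q ^ q) :=
        mul_le_mul_of_nonneg_left hyE (by linarith)
      have h2 := stmt16_key q hq
      linarith
    have hrec' : x n = x (n + 1) * (1 - x (n + 1)) ^ (q - 1) := by
      have := hrec (n + 1) (Nat.le_add_left 1 n) le_rfl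
      simpa using this
    have hstep : 1 / x n ≤ 1 / x (n + 1) + 10 * (q - 1) := by
      rw [hrec']
      exact stmt16_step q (x (n + 1)) hq hy hy2 hpy
    push_cast
    linarith
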